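/- Let V be a finite-dimensional complex inner product space and let A ⊆ End(V) be a commutative (unital) subalgebra such that every element of A is self-adjoint with respect to the inner product, and such that A admits a cyclic vector v with A·v = V. Then V decomposes as a direct sum of one-dimensional joint eigenspaces of A: there exist n = dim V pairwise distinct algebra homomorphisms χ_1, …, χ_n : A → ℂ and a basis w_1, …, w_n of V such that a(w_m) = χ_m(a)·w_m for all a ∈ A and all m. -/

import Mathlib

noncomputable section

/-- A symmetric nilpotent operator is zero. -/
private lemma nilpotent_symmetric_eq_zero
    {V : Type*} [NormedAddCommGroup V] [InnerProductSpace ℂ V]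
    {T : Module.End ℂ V} (hT : T.IsSymmetric) {n : ℕ} (hn : T ^ n = 0) : T = 0 := by
  have hpow : ∀ k : ℕ, (T ^ k).IsSymmetric := by
    intro k
    induction k with
    | zero => intro x y; simp
    | succ k ih =>
      intro x y
      have h1 : (T ^ (k+1)) x = (T ^ k) (T x) := by
        rw [pow_succ, Module.End.mul_apply]
      have h2 : (T ^ (k+1)) y = T ((T ^ k) y) := by
        rw [pow_succ', Module.End.mul_apply]
      rw [h1, h2, ih (T x) y, hT x ((T ^ k) y)]
  have sq : ∀ S : Module.End ℂ V, S.IsSymmetric → S ^ 2 = 0 → S = 0 := by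
    intro S hS h2
    ext w
    have h0 : inner ℂ (S w) (S w) = (0 : ℂ) := by
      rw [hS w (S w)]
      have hss : S (S w) = 0 := by
        have h2' : (S ^ 2) w = 0 := by rw [h2]; rfl
        rwa [pow_two, Module.End.mul_apply] at h2'
      rw [hss, inner_zero_right]
    rw [LinearMap.zero_apply]
    exact inner_self_eq_zero.mp h0
  have key : ∀ k : ℕ, T ^ (2 ^ k) = 0 → T = 0 := by
    intro k
    induction k with
    | zero => intro h; simpa using h
    | succ k ih =>
      intro h
      apply ih
      apply sq _ (hpow _)
      rw [← pow_mul, ← pow_succ]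
      exact h
  rcases Nat.eq_zero_or_pos n with rfl | hp
  · have h1 : (1 : Module.End ℂ V) = 0 := by simpa using hn
    calc T = T * 1 := (mul_one T).symm
    _ = 0 := by rw [h1, mul_zero]
  · refine key n ?_
    have h2 : T ^ (2 ^ n) = T ^ (2 ^ n - n) * T ^ n := by
      rw [← pow_add]
      congr 1
      exact (Nat.sub_add_cancel (Nat.lt_two_pow_self (n := n)).le).symm
    rw [h2, hn, mul_zero]

set_option synthInstance.maxHeartbeats 1000000 in
set_option maxHeartbeats 2000000 in
theorem selfadjoint_commutative_cyclic_simple_spectrum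
    {V : Type*} [NormedAddCommGroup V] [InnerProductSpace ℂ V] [FiniteDimensional ℂ V]
    (A : Subalgebra ℂ (Module.End ℂ V))
    (hcomm : ∀ x ∈ A, ∀ y ∈ A, x * y = y * x)
    (hsa : ∀ a ∈ A, LinearMap.IsSymmetric (a : Module.End ℂ V))
    (v : V) (hv : ∀ w : V, ∃ a ∈ A, a v = w) :
    ∃ (χ : Fin (Module.finrank ℂ V) → (A →ₐ[ℂ] ℂ))
      (w : Module.Basis (Fin (Module.finrank ℂ V)) ℂ V),
      Function.Injective χ ∧
        ∀ (a : A) (m : Fin (Module.finrank ℂ V)),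
          (a : Module.End ℂ V) (w m) = χ m a • w m := by
  classical
  haveI hfd : FiniteDimensional ℂ ↥A := inferInstance
  letI : CommRing ↥A :=
    { (inferInstance : Ring ↥A) with
      mul_comm := fun x y => Subtype.ext (hcomm x.1 x.2 y.1 y.2) }
  haveI : IsArtinianRing ↥A := IsArtinianRing.of_finite ℂ ↥A
  haveI : IsReduced ↥A := by
    constructor
    intro x hx
    obtain ⟨k, hk⟩ := hx
    have hco : (x : Module.End ℂ V) ^ k = 0 := by
      have := congrArg Subtype.val hk
      simpa using this
    exact Subtype.ext (nilpotent_symmetric_eq_zero (hsa x.1 x.2) hco)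
  -- the evaluation map at the cyclic vector
  let φ : ↥A →ₗ[ℂ] V :=
    { toFun := fun a => (a : Module.End ℂ V) v
      map_add' := fun a b => rfl
      map_smul' := fun c a => rfl }
  have hφsurj : Function.Surjective φ := by
    intro w
    obtain ⟨a, ha, hav⟩ := hv w
    exact ⟨⟨a, ha⟩, hav⟩
  have hker : ∀ a : ↥A, φ a = 0 → a = 0 := by
    intro a h0
    apply Subtype.ext
    apply LinearMap.ext
    intro w
    obtain ⟨b, hb, rfl⟩ := hv w
    have h1 : a.1 (b v) = (a.1 * b) v := rfl
    rw [ZeroMemClass.coe_zero, LinearMap.zero_apply, h1, hcomm a.1 a.2 b hb]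
    show b (a.1 v) = 0
    rw [show a.1 v = 0 from h0, map_zero]
  have hφinj : Function.Injective φ := (injective_iff_map_eq_zero φ).mpr hker
  let eφ : ↥A ≃ₗ[ℂ] V := LinearEquiv.ofBijective φ ⟨hφinj, hφsurj⟩
  -- the set of maximal ideals
  haveI : Finite {I : Ideal ↥A | I.IsMaximal} :=
    (IsArtinianRing.setOfPred_isMaximal_finite ↥A).to_subtype
  haveI : Fintype {I : Ideal ↥A | I.IsMaximal} := Fintype.ofFinite _
  letI instF : ∀ I : {I : Ideal ↥A | I.IsMaximal}, Field (↥A ⧸ I.1) := fun I =>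
    haveI : I.1.IsMaximal := I.2
    Ideal.Quotient.field I.1
  have ψbij : ∀ I : {I : Ideal ↥A | I.IsMaximal},
      Function.Bijective (Algebra.ofId ℂ (↥A ⧸ I.1)) := by
    intro I
    haveI : I.1.IsMaximal := I.2
    haveI : Module.Finite ℂ (↥A ⧸ I.1) :=
      Module.Finite.of_surjective (Ideal.Quotient.mkₐ ℂ I.1).toLinearMap
        Ideal.Quotient.mk_surjective
    exact ⟨(algebraMap ℂ _).injective, IsAlgClosed.algebraMap_bijective_of_isIntegral.2⟩
  let ψ : ∀ I : {I : Ideal ↥A | I.IsMaximal}, ℂ ≃ₐ[ℂ] (↥A ⧸ I.1) := fun I =>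
    AlgEquiv.ofBijective (Algebra.ofId ℂ _) (ψbij I)
  -- the structure equivalence, upgraded to an algebra equivalence
  let eM : MaximalSpectrum ↥A ≃ {I : Ideal ↥A | I.IsMaximal} :=
    { toFun := fun m => ⟨m.asIdeal, m.isMaximal⟩
      invFun := fun I => ⟨I.1, I.2⟩
      left_inv := fun _ => rfl
      right_inv := fun _ => rfl }
  let eqP : ↥A ≃+* (∀ I : {I : Ideal ↥A | I.IsMaximal}, ↥A ⧸ I.1) :=
    (IsArtinianRing.equivPi ↥A).toRingEquiv.trans
      (RingEquiv.piCongrLeft' (fun m : MaximalSpectrum ↥A => ↥A ⧸ m.asIdeal) eM)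
  have heqP : ∀ (a : ↥A) (I : {I : Ideal ↥A | I.IsMaximal}),
      eqP a I = Ideal.Quotient.mk I.1 a := fun a I => rfl
  let eqA : ↥A ≃ₐ[ℂ] (∀ I : {I : Ideal ↥A | I.IsMaximal}, ↥A ⧸ I.1) :=
    AlgEquiv.ofRingEquiv (f := eqP) (fun c => by
      funext I
      rw [heqP]
      exact (Ideal.Quotient.mkₐ ℂ I.1).commutes c)
  let G : ↥A ≃ₐ[ℂ] ({I : Ideal ↥A | I.IsMaximal} → ℂ) :=
    eqA.trans (AlgEquiv.piCongrRight fun I => (ψ I).symm)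
  let e : {I : Ideal ↥A | I.IsMaximal} → ↥A := fun I => G.symm (Pi.single I 1)
  have hGe : ∀ I, G (e I) = Pi.single I 1 := fun I => G.apply_symm_apply _
  let χ' : {I : Ideal ↥A | I.IsMaximal} → (↥A →ₐ[ℂ] ℂ) := fun I =>
    (Pi.evalAlgHom ℂ (fun _ => ℂ) I).comp G.toAlgHom
  have hχ' : ∀ I a, χ' I a = G a I := fun I a => rfl
  have heig : ∀ (a : ↥A) (I : {I : Ideal ↥A | I.IsMaximal}),
      a * e I = χ' I a • e I := by
    intro a I
    apply G.injective
    rw [map_mul, map_smul, hGe]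
    funext J
    rcases eq_or_ne J I with rfl | hJ
    · simp [hχ']
    · simp [Pi.single_eq_of_ne hJ]
  have hdelta : ∀ I J, χ' I (e J) =
      (Pi.single J (1 : ℂ) : {I : Ideal ↥A | I.IsMaximal} → ℂ) I := fun I J => by
    rw [hχ', hGe]
  -- cardinality
  have hcard : Fintype.card {I : Ideal ↥A | I.IsMaximal} = Module.finrank ℂ V := by
    have h1 : Module.finrank ℂ ↥A = Module.finrank ℂ V := eφ.finrank_eq
    have h2 : Module.finrank ℂ ↥A = Fintype.card {I : Ideal ↥A | I.IsMaximal} := by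
      rw [G.toLinearEquiv.finrank_eq, Module.finrank_fintype_fun_eq_card]
    rw [← h2, h1]
  let σ : Fin (Module.finrank ℂ V) ≃ {I : Ideal ↥A | I.IsMaximal} :=
    (Fintype.equivFinOfCardEq hcard).symm
  -- the basis
  let b : Module.Basis {I : Ideal ↥A | I.IsMaximal} ℂ ↥A :=
    (Pi.basisFun ℂ _).map G.symm.toLinearEquiv
  have hb : ∀ I, b I = e I := by
    intro I
    simp only [b, Module.Basis.map_apply, Pi.basisFun_apply, e, LinearEquiv.coe_coe]
    rfl
  let w : Module.Basis (Fin (Module.finrank ℂ V)) ℂ V := (b.map eφ).reindex σ.symm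
  have hw : ∀ m, w m = eφ (e (σ m)) := by
    intro m
    rw [Module.Basis.reindex_apply, Module.Basis.map_apply, Equiv.symm_symm, hb]
  refine ⟨fun m => χ' (σ m), w, ?_, ?_⟩
  · intro m k hmk
    by_contra hne
    have hσ : σ m ≠ σ k := fun h => hne (σ.injective h)
    have hmk' : χ' (σ m) = χ' (σ k) := hmk
    have h0 : (0 : ℂ) = 1 := by
      calc (0 : ℂ) = (Pi.single (σ k) (1 : ℂ) : {I : Ideal ↥A | I.IsMaximal} → ℂ) (σ m) :=
            (Pi.single_eq_of_ne (M := fun _ : {I : Ideal ↥A | I.IsMaximal} => ℂ) hσ 1).symm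
      _ = χ' (σ m) (e (σ k)) := (hdelta _ _).symm
      _ = χ' (σ k) (e (σ k)) := by rw [hmk']
      _ = (Pi.single (σ k) (1 : ℂ) : {I : Ideal ↥A | I.IsMaximal} → ℂ) (σ k) := hdelta _ _
      _ = 1 := Pi.single_eq_same (M := fun _ : {I : Ideal ↥A | I.IsMaximal} => ℂ) _ _
    exact zero_ne_one h0
  · intro a m
    rw [hw]
    have h1 : (a : Module.End ℂ V) (eφ (e (σ m))) = φ (a * e (σ m)) := rfl
    rw [h1, heig a (σ m), map_smul]
    rfl
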